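/- Let A, B, C > 0 be real numbers and σ > N+2 where N ≥ 1 is an integer. Define h(t) = A t² + B t^{N+2} − C t^σ for t > 0. Then h has a unique positive critical point t₀, this t₀ is the global maximum of h on (0,∞), and h''(t₀) < 0. -/

import Mathlib

open Real

set_option maxHeartbeats 1000000 in
/-- For `h t = A t² + B t^(N+2) − C t^σ` with `A,B,C > 0`, `σ > N+2`,
`h` has a unique positive critical point `t₀`, which is the global maximum of `h`
on `(0,∞)`, and `h''(t₀) < 0`. -/
theorem stmt_0 (N : ℕ) (hN : 1 ≤ N) (A B C σ : ℝ) (hA : 0 < A) (hB : 0 < B) (hC : 0 < C)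
    (hσ : (N : ℝ) + 2 < σ)
    (h : ℝ → ℝ) (hh : ∀ t : ℝ, h t = A * t ^ 2 + B * t ^ (N + 2) - C * t ^ σ) :
    ∃ t₀ : ℝ, 0 < t₀ ∧ deriv h t₀ = 0 ∧ (∀ t, 0 < t → h t ≤ h t₀) ∧
      deriv (deriv h) t₀ < 0 ∧ (∀ t, 0 < t → deriv h t = 0 → t = t₀) := by
  have hfun : h = fun t => A * t ^ 2 + B * t ^ (N + 2) - C * t ^ σ := funext hh
  subst hfun
  have hN1 : (1 : ℝ) ≤ (N : ℝ) := by exact_mod_cast hN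
  have hσ2 : (2 : ℝ) < σ := by linarith
  have hσ0 : (0 : ℝ) < σ := by linarith
  set e : ℝ := σ - 2 - N with he_def
  have he : 0 < e := by simp only [he_def]; linarith
  -- derivative of h at positive points
  have hd : ∀ t : ℝ, 0 < t → HasDerivAt (fun t => A * t ^ 2 + B * t ^ (N + 2) - C * t ^ σ)
      (A * (2 * t) + B * ((N + 2) * t ^ (N + 1)) - C * (σ * t ^ (σ - 1))) t := by
    intro t ht
    have h1 : HasDerivAt (fun t : ℝ => t ^ 2) ((2 : ℕ) * t ^ 1) t := hasDerivAt_pow 2 t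
    have h2 : HasDerivAt (fun t : ℝ => t ^ (N + 2)) ((N + 2 : ℕ) * t ^ (N + 1)) t :=
      hasDerivAt_pow (N + 2) t
    have h3 : HasDerivAt (fun t : ℝ => t ^ σ) (σ * t ^ (σ - 1)) t :=
      Real.hasDerivAt_rpow_const (Or.inl ht.ne')
    have := ((h1.const_mul A).add (h2.const_mul B)).sub (h3.const_mul C)
    refine HasDerivAt.congr_deriv this ?_
    push_cast
    ring
  -- the auxiliary function ψ
  set ψ : ℝ → ℝ := fun t => C * σ * t ^ e - (((N : ℝ) + 2) * B + 2 * A / t ^ N) with hψ_def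
  -- deriv h in terms of ψ
  have hderiv : ∀ t : ℝ, 0 < t →
      deriv (fun t => A * t ^ 2 + B * t ^ (N + 2) - C * t ^ σ) t = -(t ^ (N + 1)) * ψ t := by
    intro t ht
    rw [(hd t ht).deriv, hψ_def]
    have hrs : t ^ (N + 1) * t ^ e = t ^ (σ - 1) := by
      rw [← Real.rpow_natCast t (N + 1), ← Real.rpow_add ht]
      congr 1
      push_cast
      simp only [he_def]
      ring
    have htN : (t : ℝ) ^ N ≠ 0 := by positivity
    field_simp
    rw [← hrs]
    ring
  -- strict monotonicity of ψ on (0,∞)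
  have hmono : ∀ x ∈ Set.Ioi (0:ℝ), ∀ y ∈ Set.Ioi (0:ℝ), x < y → ψ x < ψ y := by
    intro x hx y hy hxy
    simp only [Set.mem_Ioi] at hx hy
    have h1 : x ^ e < y ^ e := Real.rpow_lt_rpow hx.le hxy he
    have h2 : x ^ N < y ^ N := pow_lt_pow_left₀ hxy hx.le (by omega)
    have hxN : (0:ℝ) < x ^ N := pow_pos hx N
    have hyN : (0:ℝ) < y ^ N := pow_pos hy N
    have h3 : 2 * A / y ^ N < 2 * A / x ^ N :=
      div_lt_div_of_pos_left (by linarith) hxN h2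
    have h4 : C * σ * x ^ e < C * σ * y ^ e :=
      mul_lt_mul_of_pos_left h1 (by positivity)
    simp only [hψ_def]
    linarith
  -- continuity of ψ away from 0
  have hψcont : ∀ s : Set ℝ, s ⊆ Set.Ioi (0:ℝ) → ContinuousOn ψ s := by
    intro s hs
    intro x hx
    have hx0 : x ≠ 0 := ne_of_gt (hs hx)
    have c1 : ContinuousAt (fun t : ℝ => t ^ e) x := Real.continuousAt_rpow_const x e (Or.inl hx0)
    have c2 : ContinuousAt ψ x := by
      simp only [hψ_def]
      exact (continuousAt_const.mul c1).sub (continuousAt_const.add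
        (ContinuousAt.div continuousAt_const ((continuous_pow N).continuousAt)
          (pow_ne_zero N hx0)))
    exact c2.continuousWithinAt
  -- endpoints for IVT
  set a : ℝ := min 1 (A / (C * σ)) with ha_def
  have ha0 : 0 < a := lt_min one_pos (by positivity)
  have ha1 : a ≤ 1 := min_le_left _ _
  have haA : a ≤ A / (C * σ) := min_le_right _ _
  have hψa : ψ a < 0 := by
    have hae : a ^ e ≤ 1 := Real.rpow_le_one ha0.le ha1 he.le
    have haN : a ^ N ≤ a := pow_le_of_le_one ha0.le ha1 (by omega)
    have haN0 : (0:ℝ) < a ^ N := pow_pos ha0 N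
    have hkey : 2 * (C * σ) ≤ 2 * A / a ^ N := by
      rw [le_div_iff₀ haN0]
      have hca : a * (C * σ) ≤ A := (le_div_iff₀ (mul_pos hC hσ0)).1 haA
      nlinarith [mul_pos hC hσ0]
    have h4 : C * σ * a ^ e ≤ C * σ := by nlinarith [mul_pos hC hσ0]
    simp only [hψ_def]
    nlinarith [mul_pos hC hσ0, mul_pos (show (0:ℝ) < (N:ℝ) + 2 by linarith) hB]
  set M : ℝ := ((N:ℝ) + 2) * B + 2 * A with hM_def
  have hM : 0 < M := by positivity
  set b : ℝ := max 1 ((M / (C * σ) + 1) ^ e⁻¹) with hb_def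
  have hb1 : (1:ℝ) ≤ b := le_max_left _ _
  have hb0 : 0 < b := lt_of_lt_of_le one_pos hb1
  have hψb : 0 < ψ b := by
    have hbase : (0:ℝ) ≤ M / (C * σ) + 1 := by positivity
    have hbe : M / (C * σ) + 1 ≤ b ^ e := by
      have h1 : ((M / (C * σ) + 1) ^ e⁻¹) ^ e ≤ b ^ e :=
        Real.rpow_le_rpow (by positivity) (le_max_right _ _) he.le
      rwa [Real.rpow_inv_rpow hbase he.ne'] at h1
    have h2 : M + C * σ ≤ C * σ * b ^ e := by
      have := mul_le_mul_of_nonneg_left hbe (by positivity : (0:ℝ) ≤ C * σ)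
      calc M + C * σ = C * σ * (M / (C * σ) + 1) := by field_simp
        _ ≤ C * σ * b ^ e := this
    have hbN : (1:ℝ) ≤ b ^ N := one_le_pow₀ hb1
    have h3 : 2 * A / b ^ N ≤ 2 * A := div_le_self (by positivity) hbN
    simp only [hψ_def, hM_def] at h2 ⊢
    nlinarith [mul_pos hC hσ0]
  have hab : a ≤ b := le_trans ha1 hb1
  -- IVT gives the critical point
  obtain ⟨t₀, ht₀mem, ht₀ψ⟩ :
      ∃ t₀ ∈ Set.Icc a b, ψ t₀ = 0 := by
    have h0mem : (0:ℝ) ∈ Set.Icc (ψ a) (ψ b) := ⟨hψa.le, hψb.le⟩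
    have hsub : Set.Icc a b ⊆ Set.Ioi (0:ℝ) := fun x hx => lt_of_lt_of_le ha0 hx.1
    have := intermediate_value_Icc hab (hψcont _ hsub) h0mem
    obtain ⟨t₀, ht₀, ht₀'⟩ := this
    exact ⟨t₀, ht₀, ht₀'⟩
  have ht₀ : 0 < t₀ := lt_of_lt_of_le ha0 ht₀mem.1
  refine ⟨t₀, ht₀, ?_, ?_, ?_, ?_⟩
  · rw [hderiv t₀ ht₀, ht₀ψ, mul_zero]
  · -- global max
    have hcontOn : ∀ s : Set ℝ, s ⊆ Set.Ioi (0:ℝ) →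
        ContinuousOn (fun t => A * t ^ 2 + B * t ^ (N + 2) - C * t ^ σ) s :=
      fun s hs t hts => ((hd t (hs hts)).differentiableAt.continuousAt).continuousWithinAt
    have hpos : ∀ t, 0 < t → t < t₀ →
        0 < deriv (fun t => A * t ^ 2 + B * t ^ (N + 2) - C * t ^ σ) t := by
      intro t ht htlt
      rw [hderiv t ht]
      have : ψ t < 0 := by
        have := hmono t ht t₀ ht₀ htlt
        linarith [ht₀ψ ▸ this]
      nlinarith [pow_pos ht (N + 1)]
    have hneg : ∀ t, t₀ < t →
        deriv (fun t => A * t ^ 2 + B * t ^ (N + 2) - C * t ^ σ) t < 0 := by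
      intro t htgt
      have ht : 0 < t := lt_trans ht₀ htgt
      rw [hderiv t ht]
      have : 0 < ψ t := by
        have := hmono t₀ ht₀ t ht htgt
        linarith [ht₀ψ ▸ this]
      nlinarith [pow_pos ht (N + 1)]
    intro t ht
    rcases lt_trichotomy t t₀ with hlt | heq | hgt
    · have hsm : StrictMonoOn (fun t => A * t ^ 2 + B * t ^ (N + 2) - C * t ^ σ)
          (Set.Ioc 0 t₀) := by
        apply strictMonoOn_of_deriv_pos (convex_Ioc 0 t₀)
          (hcontOn _ (fun x hx => hx.1))
        intro x hx
        rw [interior_Ioc] at hx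
        exact hpos x hx.1 hx.2
      exact (hsm ⟨ht, hlt.le⟩ ⟨ht₀, le_refl _⟩ hlt).le
    · rw [heq]
    · have hsa : StrictAntiOn (fun t => A * t ^ 2 + B * t ^ (N + 2) - C * t ^ σ)
          (Set.Ici t₀) := by
        apply strictAntiOn_of_deriv_neg (convex_Ici t₀)
          (hcontOn _ (fun x hx => lt_of_lt_of_le ht₀ hx))
        intro x hx
        rw [interior_Ici] at hx
        exact hneg x hx
      exact (hsa (Set.self_mem_Ici) (Set.mem_Ici.2 hgt.le) hgt).le
  · -- second derivative negative
    have hEv : deriv (fun t => A * t ^ 2 + B * t ^ (N + 2) - C * t ^ σ) =ᶠ[nhds t₀]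
        (fun t => A * (2 * t) + B * ((↑N + 2) * t ^ (N + 1)) - C * (σ * t ^ (σ - 1))) := by
      filter_upwards [Ioi_mem_nhds ht₀] with t ht using (hd t ht).deriv
    rw [hEv.deriv_eq]
    have h1 : HasDerivAt (fun t : ℝ => A * (2 * t)) (A * 2) t₀ := by
      simpa using ((hasDerivAt_id t₀).const_mul (2:ℝ)).const_mul A
    have h2 : HasDerivAt (fun t : ℝ => B * ((↑N + 2) * t ^ (N + 1)))
        (B * (((N:ℝ) + 2) * ((N + 1) * t₀ ^ N))) t₀ := by
      have := (hasDerivAt_pow (N + 1) t₀).const_mul ((N:ℝ) + 2)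
      have := this.const_mul B
      refine HasDerivAt.congr_deriv this ?_
      push_cast
      ring
    have h3 : HasDerivAt (fun t : ℝ => C * (σ * t ^ (σ - 1)))
        (C * (σ * ((σ - 1) * t₀ ^ (σ - 2)))) t₀ := by
      have hr : HasDerivAt (fun t : ℝ => t ^ (σ - 1)) ((σ - 1) * t₀ ^ (σ - 1 - 1)) t₀ :=
        Real.hasDerivAt_rpow_const (Or.inl ht₀.ne')
      have hexp : σ - 1 - 1 = σ - 2 := by ring
      rw [hexp] at hr
      exact (hr.const_mul σ).const_mul C
    rw [HasDerivAt.deriv (f := fun t => A * (2 * t) + B * ((↑N + 2) * t ^ (N + 1)) - C * (σ * t ^ (σ - 1))) ((h1.add h2).sub h3)]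
    -- use ψ t₀ = 0
    have htN : (0:ℝ) < t₀ ^ N := pow_pos ht₀ N
    have heq : C * σ * t₀ ^ e = ((N:ℝ) + 2) * B + 2 * A / t₀ ^ N := by
      have := ht₀ψ
      simp only [hψ_def] at this
      linarith
    have hkey : C * σ * t₀ ^ e * t₀ ^ N = ((N:ℝ) + 2) * B * t₀ ^ N + 2 * A := by
      rw [heq]
      field_simp
    have hsplit : t₀ ^ (σ - 2) = t₀ ^ e * t₀ ^ N := by
      rw [← Real.rpow_natCast t₀ N, ← Real.rpow_add ht₀]
      congr 1
      simp only [he_def]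
      ring
    rw [hsplit]
    have hsub : C * (σ * ((σ - 1) * (t₀ ^ e * t₀ ^ N)))
        = (σ - 1) * (((N:ℝ) + 2) * B * t₀ ^ N + 2 * A) := by
      linear_combination (σ - 1) * hkey
    rw [hsub]
    nlinarith [mul_pos (mul_pos hB htN) (sub_pos.2 hσ), mul_pos hA (sub_pos.2 hσ2)]
  · -- uniqueness
    intro t ht hdt
    rw [hderiv t ht] at hdt
    have htψ : ψ t = 0 := by
      have : (t : ℝ) ^ (N + 1) ≠ 0 := by positivity
      rcases mul_eq_zero.1 hdt with h | h
      · exact absurd (neg_eq_zero.1 h) this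
      · exact h
    rcases lt_trichotomy t t₀ with hlt | heq | hgt
    · exact absurd (htψ ▸ ht₀ψ ▸ hmono t ht t₀ ht₀ hlt) (lt_irrefl 0)
    · exact heq
    · exact absurd (ht₀ψ ▸ htψ ▸ hmono t₀ ht₀ t ht hgt) (lt_irrefl 0)
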